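/- The algebra R(F₄) = K⟨x,y⟩/(xyx, yxy, (x+y)²) is spanned over K by the twelve elements 1, x, y, x², xy, yx, x³, x²y, yx², x⁴, x³y, x⁵; in particular R(F₄) has dimension at most 12 over K. -/

import Mathlib

/-- The defining relations of `R(F₄) = K⟨x,y⟩/(xyx, yxy, (x+y)²)`. -/
inductive F4Rel (K : Type) [Field K] : FreeAlgebra K Bool → FreeAlgebra K Bool → Prop
  | xyx : F4Rel K (FreeAlgebra.ι K true * FreeAlgebra.ι K false * FreeAlgebra.ι K true) 0
  | yxy : F4Rel K (FreeAlgebra.ι K false * FreeAlgebra.ι K true * FreeAlgebra.ι K false) 0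
  | sq  : F4Rel K ((FreeAlgebra.ι K true + FreeAlgebra.ι K false) ^ 2) 0

/-- The algebra `R(F₄)`. -/
abbrev RF4 (K : Type) [Field K] := RingQuot (F4Rel K)

/-- The image of the generator `x` in `R(F₄)`. -/
noncomputable def Rx (K : Type) [Field K] : RF4 K :=
  RingQuot.mkAlgHom K (F4Rel K) (FreeAlgebra.ι K true)

/-- The image of the generator `y` in `R(F₄)`. -/
noncomputable def Ry (K : Type) [Field K] : RF4 K :=
  RingQuot.mkAlgHom K (F4Rel K) (FreeAlgebra.ι K false)

section Aux

variable (K : Type) [Field K]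

local notation "X" => Rx K
local notation "Y" => Ry K

lemma rf4_h1 : X * Y * X = 0 := by
  have h := RingQuot.mkAlgHom_rel K (F4Rel.xyx (K := K))
  simpa [Rx, Ry, map_mul] using h

lemma rf4_h2 : Y * X * Y = 0 := by
  have h := RingQuot.mkAlgHom_rel K (F4Rel.yxy (K := K))
  simpa [Rx, Ry, map_mul] using h

lemma rf4_h3 : (X + Y) ^ 2 = 0 := by
  have h := RingQuot.mkAlgHom_rel K (F4Rel.sq (K := K))
  simpa [Rx, Ry, map_pow, map_add] using h

lemma rf4_y2 : Y ^ 2 = -(X ^ 2 + X * Y + Y * X) := by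
  refine eq_neg_of_add_eq_zero_left ?_
  have e : Y ^ 2 + (X ^ 2 + X * Y + Y * X) = (X + Y) ^ 2 := by noncomm_ring
  rw [e, rf4_h3]

lemma rf4_yx3 : Y * X ^ 3 = X ^ 3 * Y := by
  rw [← sub_eq_zero]
  have e : Y * X ^ 3 - X ^ 3 * Y =
      (X * Y * X) * Y - Y * (X * Y * X) - (Y * X * Y) * Y + Y * (Y * X * Y)
        - (X + Y) ^ 2 * (X * Y) + (Y * X) * (X + Y) ^ 2 := by noncomm_ring
  rw [e, rf4_h1, rf4_h2, rf4_h3]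
  simp

lemma rf4_yx2y : Y * X ^ 2 * Y = -(X ^ 3 * Y) := by
  rw [← sub_eq_zero]
  have e : Y * X ^ 2 * Y - -(X ^ 3 * Y) =
      -((X * Y * X) * Y) - Y * (Y * X * Y) + (X + Y) ^ 2 * (X * Y) := by noncomm_ring
  rw [e, rf4_h1, rf4_h2, rf4_h3]
  simp

lemma rf4_x4y : X ^ 4 * Y = 0 := by
  have e : X ^ 4 * Y =
      -((X * Y * X) * (X * Y)) - X * (X * Y * X) * Y - (X * Y) * (Y * X * Y)
        + X * (X + Y) ^ 2 * (X * Y) := by noncomm_ring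
  rw [e, rf4_h1, rf4_h2, rf4_h3]
  simp

lemma rf4_x5y : X ^ 5 * Y = 0 := by
  have e : X ^ 5 * Y =
      -(X * (X * Y * X) * (X * Y)) - X ^ 2 * (X * Y * X) * Y
        - (X ^ 2 * Y) * (Y * X * Y) + X ^ 2 * (X + Y) ^ 2 * (X * Y) := by noncomm_ring
  rw [e, rf4_h1, rf4_h2, rf4_h3]
  simp

lemma rf4_x6 : X ^ 6 = 0 := by
  have e : X ^ 6 =
      (X * Y * X) * (Y * Y * X) - Y * (X * Y * X) * (Y * X)
        - X ^ 2 * (X * Y * X) * X - X ^ 3 * (X * Y * X) - (Y * X ^ 2) * (X * Y * X)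
        - (Y * X * Y) * (Y * Y * X) + Y * (Y * X * Y) * (Y * X)
        - (X + Y) ^ 2 * (X * Y * Y * X) + (Y * X) * (X + Y) ^ 2 * (Y * X)
        + X ^ 3 * (X + Y) ^ 2 * X := by noncomm_ring
  rw [e, rf4_h1, rf4_h2, rf4_h3]
  simp

lemma rf4_yy : Y * Y = -(X ^ 2) - X * Y - Y * X := by
  rw [← sub_eq_zero]
  have e : Y * Y - (-(X ^ 2) - X * Y - Y * X) = (X + Y) ^ 2 := by noncomm_ring
  rw [e, rf4_h3]

lemma rf4_xy2 : X * Y * Y = -(X ^ 3) - X ^ 2 * Y := by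
  rw [← sub_eq_zero]
  have e : X * Y * Y - (-(X ^ 3) - X ^ 2 * Y) = X * (X + Y) ^ 2 - X * Y * X := by
    noncomm_ring
  rw [e, rf4_h1, rf4_h3]
  simp

lemma rf4_x2y2 : X ^ 2 * Y * Y = -(X ^ 4) - X ^ 3 * Y := by
  rw [← sub_eq_zero]
  have e : X ^ 2 * Y * Y - (-(X ^ 4) - X ^ 3 * Y) =
      X ^ 2 * (X + Y) ^ 2 - X * (X * Y * X) := by noncomm_ring
  rw [e, rf4_h1, rf4_h3]
  simp

lemma rf4_x3y2 : X ^ 3 * Y * Y = -(X ^ 5) := by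
  rw [← sub_eq_zero]
  have e : X ^ 3 * Y * Y - -(X ^ 5) =
      X ^ 3 * (X + Y) ^ 2 - X ^ 2 * (X * Y * X) - X ^ 4 * Y := by noncomm_ring
  rw [e, rf4_h1, rf4_h3, rf4_x4y]
  simp

end Aux

set_option maxHeartbeats 800000 in
theorem stmt11 (K : Type) [Field K] :
    Submodule.span K
      ({1, Rx K, Ry K, (Rx K) ^ 2, Rx K * Ry K, Ry K * Rx K,
        (Rx K) ^ 3, (Rx K) ^ 2 * Ry K, Ry K * (Rx K) ^ 2,
        (Rx K) ^ 4, (Rx K) ^ 3 * Ry K, (Rx K) ^ 5} : Set (RF4 K)) = ⊤ ∧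
    Module.rank K (RF4 K) ≤ 12 := by
  let X := Rx K
  let Y := Ry K
  let s : Set (RF4 K) :=
    {1, X, Y, X ^ 2, X * Y, Y * X, X ^ 3, X ^ 2 * Y, Y * X ^ 2,
      X ^ 4, X ^ 3 * Y, X ^ 5}
  let S : Submodule K (RF4 K) := Submodule.span K s
  have m1 : (1 : RF4 K) ∈ S := Submodule.subset_span (Set.mem_insert _ _)
  have mx : X ∈ S := Submodule.subset_span
    (Set.mem_insert_of_mem _ (Set.mem_insert _ _))
  have my : Y ∈ S := Submodule.subset_span
    (Set.mem_insert_of_mem _ (Set.mem_insert_of_mem _ (Set.mem_insert _ _)))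
  have mx2 : X ^ 2 ∈ S := Submodule.subset_span
    (Set.mem_insert_of_mem _ (Set.mem_insert_of_mem _ (Set.mem_insert_of_mem _
      (Set.mem_insert _ _))))
  have mxy : X * Y ∈ S := Submodule.subset_span
    (Set.mem_insert_of_mem _ (Set.mem_insert_of_mem _ (Set.mem_insert_of_mem _
      (Set.mem_insert_of_mem _ (Set.mem_insert _ _)))))
  have myx : Y * X ∈ S := Submodule.subset_span
    (Set.mem_insert_of_mem _ (Set.mem_insert_of_mem _ (Set.mem_insert_of_mem _
      (Set.mem_insert_of_mem _ (Set.mem_insert_of_mem _ (Set.mem_insert _ _))))))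
  have mx3 : X ^ 3 ∈ S := Submodule.subset_span
    (Set.mem_insert_of_mem _ (Set.mem_insert_of_mem _ (Set.mem_insert_of_mem _
      (Set.mem_insert_of_mem _ (Set.mem_insert_of_mem _ (Set.mem_insert_of_mem _
        (Set.mem_insert _ _)))))))
  have mx2y : X ^ 2 * Y ∈ S := Submodule.subset_span
    (Set.mem_insert_of_mem _ (Set.mem_insert_of_mem _ (Set.mem_insert_of_mem _
      (Set.mem_insert_of_mem _ (Set.mem_insert_of_mem _ (Set.mem_insert_of_mem _
        (Set.mem_insert_of_mem _ (Set.mem_insert _ _))))))))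
  have myx2 : Y * X ^ 2 ∈ S := Submodule.subset_span
    (Set.mem_insert_of_mem _ (Set.mem_insert_of_mem _ (Set.mem_insert_of_mem _
      (Set.mem_insert_of_mem _ (Set.mem_insert_of_mem _ (Set.mem_insert_of_mem _
        (Set.mem_insert_of_mem _ (Set.mem_insert_of_mem _ (Set.mem_insert _ _)))))))))
  have mx4 : X ^ 4 ∈ S := Submodule.subset_span
    (Set.mem_insert_of_mem _ (Set.mem_insert_of_mem _ (Set.mem_insert_of_mem _
      (Set.mem_insert_of_mem _ (Set.mem_insert_of_mem _ (Set.mem_insert_of_mem _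
        (Set.mem_insert_of_mem _ (Set.mem_insert_of_mem _ (Set.mem_insert_of_mem _
          (Set.mem_insert _ _))))))))))
  have mx3y : X ^ 3 * Y ∈ S := Submodule.subset_span
    (Set.mem_insert_of_mem _ (Set.mem_insert_of_mem _ (Set.mem_insert_of_mem _
      (Set.mem_insert_of_mem _ (Set.mem_insert_of_mem _ (Set.mem_insert_of_mem _
        (Set.mem_insert_of_mem _ (Set.mem_insert_of_mem _ (Set.mem_insert_of_mem _
          (Set.mem_insert_of_mem _ (Set.mem_insert _ _)))))))))))
  have mx5 : X ^ 5 ∈ S := Submodule.subset_span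
    (Set.mem_insert_of_mem _ (Set.mem_insert_of_mem _ (Set.mem_insert_of_mem _
      (Set.mem_insert_of_mem _ (Set.mem_insert_of_mem _ (Set.mem_insert_of_mem _
        (Set.mem_insert_of_mem _ (Set.mem_insert_of_mem _ (Set.mem_insert_of_mem _
          (Set.mem_insert_of_mem _ (Set.mem_insert_of_mem _ rfl)))))))))))
  -- closure under right multiplication by X
  have closX : ∀ a ∈ S, a * X ∈ S := by
    intro a ha
    induction ha using Submodule.span_induction with
    | mem a ha =>
      rcases ha with rfl | rfl | rfl | rfl | rfl | rfl | rfl | rfl | rfl | rfl | rfl | rfl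
      · rw [one_mul]; exact mx
      · rw [← sq]; exact mx2
      · exact myx
      · rw [← pow_succ]; exact mx3
      · rw [rf4_h1]; exact S.zero_mem
      · rw [mul_assoc, ← sq]; exact myx2
      · rw [← pow_succ]; exact mx4
      · have : X ^ 2 * Y * X = X * (X * Y * X) := by noncomm_ring
        rw [this, rf4_h1, mul_zero]; exact S.zero_mem
      · have : Y * X ^ 2 * X = Y * X ^ 3 := by noncomm_ring
        rw [this, rf4_yx3]; exact mx3y
      · rw [← pow_succ]; exact mx5
      · have : X ^ 3 * Y * X = X ^ 2 * (X * Y * X) := by noncomm_ring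
        rw [this, rf4_h1, mul_zero]; exact S.zero_mem
      · rw [← pow_succ, rf4_x6]; exact S.zero_mem
    | zero => rw [zero_mul]; exact S.zero_mem
    | add a b _ _ ha hb => rw [add_mul]; exact S.add_mem ha hb
    | smul c a _ ha => rw [smul_mul_assoc]; exact S.smul_mem c ha
  have closY : ∀ a ∈ S, a * Y ∈ S := by
    intro a ha
    induction ha using Submodule.span_induction with
    | mem a ha =>
      rcases ha with rfl | rfl | rfl | rfl | rfl | rfl | rfl | rfl | rfl | rfl | rfl | rfl
      · rw [one_mul]; exact my
      · exact mxy
      · rw [rf4_yy]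
        exact S.sub_mem (S.sub_mem (S.neg_mem mx2) mxy) myx
      · exact mx2y
      · rw [rf4_xy2]
        exact S.sub_mem (S.neg_mem mx3) mx2y
      · rw [rf4_h2]; exact S.zero_mem
      · exact mx3y
      · rw [rf4_x2y2]
        exact S.sub_mem (S.neg_mem mx4) mx3y
      · rw [rf4_yx2y]; exact S.neg_mem mx3y
      · rw [rf4_x4y]; exact S.zero_mem
      · rw [rf4_x3y2]
        exact S.neg_mem mx5
      · rw [rf4_x5y]; exact S.zero_mem
    | zero => rw [zero_mul]; exact S.zero_mem
    | add a b _ _ ha hb => rw [add_mul]; exact S.add_mem ha hb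
    | smul c a _ ha => rw [smul_mul_assoc]; exact S.smul_mem c ha
  have key : ∀ b : FreeAlgebra K Bool, ∀ a ∈ S,
      a * RingQuot.mkAlgHom K (F4Rel K) b ∈ S := by
    intro b
    induction b using FreeAlgebra.induction with
    | grade0 r =>
      intro a ha
      rw [AlgHom.commutes, ← Algebra.commutes, ← Algebra.smul_def]
      exact S.smul_mem r ha
    | grade1 i =>
      intro a ha
      cases i
      · exact closY a ha
      · exact closX a ha
    | mul p q hp hq =>
      intro a ha
      rw [map_mul, ← mul_assoc]
      exact hq _ (hp a ha)
    | add p q hp hq =>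
      intro a ha
      rw [map_add, mul_add]
      exact S.add_mem (hp a ha) (hq a ha)
  have htop : S = ⊤ := by
    rw [eq_top_iff]
    intro z _
    obtain ⟨b, rfl⟩ := RingQuot.mkAlgHom_surjective K (F4Rel K) z
    have := key b 1 m1
    rwa [one_mul] at this
  refine ⟨htop, ?_⟩
  have step : ∀ {a : RF4 K} {t : Set (RF4 K)} {n : Cardinal},
      Cardinal.mk t ≤ n → Cardinal.mk (insert a t : Set (RF4 K)) ≤ n + 1 :=
    fun h => Cardinal.mk_insert_le.trans (add_le_add_left h 1)
  have h12 : Cardinal.mk ({X ^ 5} : Set (RF4 K)) ≤ 1 := le_of_eq (Cardinal.mk_singleton _)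
  have hcard : Cardinal.mk s ≤ 12 := by
    refine (step (step (step (step (step (step (step (step (step (step
      (step h12))))))))))).trans ?_
    norm_num
  have h1 : Module.rank K ↥(Submodule.span K s) ≤ 12 := (rank_span_le s).trans hcard
  rw [← rank_top K (RF4 K), ← htop]
  exact h1
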